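/- With σ² = 2/3 and the fully-connected bipartite SEM on p vertices (|U| = ⌈p/2⌉, |V| = ⌊p/2⌋), the KL divergence from the SEM's Gaussian distribution to the standard Gaussian N(0, I_p) is at most (p/2) ln(3/2). -/
import Mathlib


open Matrix

/-- With σ² = 2/3 and the bipartite SEM covariance Σ satisfying
tr Σ = ⌈p/2⌉σ² + 2⌊p/2⌋σ² and det Σ = (σ²)^p, the KL divergence
(1/2)(tr Σ - p - log det Σ) to the standard Gaussian is at most (p/2) ln(3/2). -/
theorem stmt_15 (p : ℕ) (Sig : Matrix (Fin p) (Fin p) ℝ)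
    (htr : Sig.trace = (((p + 1) / 2 : ℕ) : ℝ) * (2 / 3)
        + 2 * ((p / 2 : ℕ) : ℝ) * (2 / 3))
    (hdet : Sig.det = (2 / 3 : ℝ) ^ p) :
    (1 / 2 : ℝ) * (Sig.trace - p - Real.log Sig.det)
      ≤ (p / 2 : ℝ) * Real.log (3 / 2) := by
  have hnat : 2 * ((p + 1) / 2) + 4 * (p / 2) ≤ 3 * p := by omega
  have h1 : (((p + 1) / 2 : ℕ) : ℝ) + 2 * ((p / 2 : ℕ) : ℝ) ≤ (3 / 2) * p := by
    have := (Nat.cast_le (α := ℝ)).mpr hnat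
    push_cast at this
    linarith
  have htr' : Sig.trace ≤ p := by
    rw [htr]; linarith
  have hlog : Real.log Sig.det = -(p * Real.log (3 / 2)) := by
    rw [hdet, Real.log_pow]
    have : (2 / 3 : ℝ) = (3 / 2 : ℝ)⁻¹ := by norm_num
    rw [this, Real.log_inv]
    ring
  rw [hlog]
  linarith
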